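/- Let n ∈ ℕ, let f : ℝ → ℝ be n times differentiable at a point x ∈ ℝ with f(x) = 0. Then for every integer s with 0 ≤ s < n, the s-th derivative of the function f^n (the pointwise n-th power of f) at x is 0, and the n-th derivative of f^n at x equals n! · (f'(x))^n. -/

import Mathlib

open scoped BigOperators
open Filter Set Topology

private lemma iterWithin_eq {u : Set ℝ} (hu : IsOpen u) (f : ℝ → ℝ) (n : ℕ) {y : ℝ}
    (hy : y ∈ u) : iteratedDerivWithin n f u y = iteratedDeriv n f y := by
  rw [iteratedDerivWithin_eq_iteratedFDerivWithin, iteratedDeriv_eq_iteratedFDeriv,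
    iteratedFDerivWithin_of_isOpen n hu hy]

private lemma diffAt_iter {u : Set ℝ} (hu : IsOpen u) {f : ℝ → ℝ} {N k : ℕ}
    (hf : ContDiffOn ℝ (N : ℕ∞) f u) (hk : k < N) {y : ℝ} (hy : y ∈ u) :
    DifferentiableAt ℝ (iteratedDeriv k f) y := by
  have h1 : DifferentiableOn ℝ (iteratedDerivWithin k f u) u :=
    hf.differentiableOn_iteratedDerivWithin (by exact_mod_cast hk) hu.uniqueDiffOn
  have h2 : DifferentiableOn ℝ (iteratedDeriv k f) u :=
    h1.congr fun z hz => (iterWithin_eq hu f k hz).symm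
  exact (h2 y hy).differentiableAt (hu.mem_nhds hy)

private lemma pascal_sum (n : ℕ) (a b : ℕ → ℝ) :
    ∑ k ∈ Finset.range (n + 2), ((n + 1).choose k : ℝ) * a k * b (n + 1 - k) =
      ∑ k ∈ Finset.range (n + 1),
        (n.choose k : ℝ) * (a (k + 1) * b (n - k) + a k * b (n - k + 1)) := by
  rw [Finset.sum_range_succ']
  have h1 : ∀ k ∈ Finset.range (n + 1),
      ((n + 1).choose (k + 1) : ℝ) * a (k + 1) * b (n + 1 - (k + 1)) =
        (n.choose k : ℝ) * a (k + 1) * b (n - k) +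
          (n.choose (k + 1) : ℝ) * a (k + 1) * b (n - k) := by
    intro k hk
    rw [Nat.choose_succ_succ, Nat.succ_sub_succ]
    push_cast
    ring
  rw [Finset.sum_congr rfl h1, Finset.sum_add_distrib]
  have h2 : ∑ k ∈ Finset.range (n + 1), (n.choose (k + 1) : ℝ) * a (k + 1) * b (n - k)
      + ((n + 1).choose 0 : ℝ) * a 0 * b (n + 1 - 0) =
      ∑ k ∈ Finset.range (n + 1), (n.choose k : ℝ) * a k * b (n - k + 1) := by
    rw [Finset.sum_range_succ, Nat.choose_succ_self]
    rw [show (∑ k ∈ Finset.range (n + 1), (n.choose k : ℝ) * a k * b (n - k + 1)) =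
      ∑ k ∈ Finset.range n, (n.choose (k + 1) : ℝ) * a (k + 1) * b (n - (k + 1) + 1)
        + (n.choose 0 : ℝ) * a 0 * b (n - 0 + 1) from Finset.sum_range_succ' _ n]
    have h3 : ∀ k ∈ Finset.range n,
        (n.choose (k + 1) : ℝ) * a (k + 1) * b (n - (k + 1) + 1) =
          (n.choose (k + 1) : ℝ) * a (k + 1) * b (n - k) := by
      intro k hk
      have : n - (k + 1) + 1 = n - k := by
        have := Finset.mem_range.1 hk; omega
      rw [this]
    rw [Finset.sum_congr rfl h3]
    simp
  simp only [mul_add, Finset.sum_add_distrib]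
  rw [add_assoc, h2]
  simp only [mul_assoc]

private lemma leibniz {u : Set ℝ} (hu : IsOpen u) {f g : ℝ → ℝ} {N : ℕ}
    (hf : ContDiffOn ℝ (N : ℕ∞) f u) (hg : ContDiffOn ℝ (N : ℕ∞) g u) :
    ∀ n ≤ N, ∀ y ∈ u, iteratedDeriv n (fun t => f t * g t) y =
      ∑ k ∈ Finset.range (n + 1),
        (n.choose k : ℝ) * iteratedDeriv k f y * iteratedDeriv (n - k) g y := by
  intro n
  induction n with
  | zero => intro _ y _; simp
  | succ n IH =>
    intro hn y hy
    have hn' : n ≤ N := Nat.le_of_succ_le hn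
    have hev : iteratedDeriv n (fun t => f t * g t) =ᶠ[𝓝 y]
        fun z => ∑ k ∈ Finset.range (n + 1),
          (n.choose k : ℝ) * iteratedDeriv k f z * iteratedDeriv (n - k) g z := by
      filter_upwards [hu.mem_nhds hy] with z hz using IH hn' z hz
    rw [iteratedDeriv_succ, hev.deriv_eq]
    have hdiff : ∀ k ∈ Finset.range (n + 1), DifferentiableAt ℝ
        (fun z => (n.choose k : ℝ) * iteratedDeriv k f z * iteratedDeriv (n - k) g z) y := by
      intro k hk
      have hk' := Finset.mem_range.1 hk
      exact (((diffAt_iter hu hf (by omega) hy).const_mul _).mul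
        (diffAt_iter hu hg (by omega) hy))
    rw [deriv_fun_sum hdiff]
    have hterm : ∀ k ∈ Finset.range (n + 1),
        deriv (fun z => (n.choose k : ℝ) * iteratedDeriv k f z * iteratedDeriv (n - k) g z) y =
          (n.choose k : ℝ) * (iteratedDeriv (k + 1) f y * iteratedDeriv (n - k) g y +
            iteratedDeriv k f y * iteratedDeriv (n - k + 1) g y) := by
      intro k hk
      have hk' := Finset.mem_range.1 hk
      have d1 : DifferentiableAt ℝ (iteratedDeriv k f) y := diffAt_iter hu hf (by omega) hy
      have d2 : DifferentiableAt ℝ (iteratedDeriv (n - k) g) y :=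
        diffAt_iter hu hg (by omega) hy
      rw [show (fun z => (n.choose k : ℝ) * iteratedDeriv k f z * iteratedDeriv (n - k) g z)
        = fun z => (n.choose k : ℝ) * (iteratedDeriv k f z * iteratedDeriv (n - k) g z) by
          funext z; ring]
      rw [deriv_const_mul _ (show DifferentiableAt ℝ (fun z => iteratedDeriv k f z * iteratedDeriv (n - k) g z) y from d1.mul d2), deriv_fun_mul d1 d2,
        ← iteratedDeriv_succ, ← iteratedDeriv_succ]
    rw [Finset.sum_congr rfl hterm, ← pascal_sum n (fun k => iteratedDeriv k f y)
      (fun k => iteratedDeriv k g y)]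

private lemma key : ∀ n : ℕ, ∀ f : ℝ → ℝ, ∀ x : ℝ, ContDiffAt ℝ (n : ℕ∞) f x → f x = 0 →
    (∀ s : ℕ, s < n → iteratedDeriv s (fun t => (f t) ^ n) x = 0) ∧
      iteratedDeriv n (fun t => (f t) ^ n) x = (n.factorial : ℝ) * (deriv f x) ^ n := by
  intro n
  induction n with
  | zero => intro f x _ _; exact ⟨fun s hs => absurd hs (Nat.not_lt_zero s), by simp⟩
  | succ n IH =>
    intro f x hf hfx
    obtain ⟨u, hu_nhds, hfu⟩ := hf.contDiffOn le_rfl (by simp)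
    obtain ⟨v, hvu, hv, hxv⟩ := mem_nhds_iff.1 hu_nhds
    have hfv : ContDiffOn ℝ (((n + 1 : ℕ) : ℕ∞)) f v := hfu.mono hvu
    have hFv : ContDiffOn ℝ (((n + 1 : ℕ) : ℕ∞)) (fun t => f t ^ n) v := hfv.pow n
    obtain ⟨IH1, IH2⟩ := IH f x (hf.of_le (by exact_mod_cast Nat.le_succ n)) hfx
    have hsum : ∀ s ≤ n + 1, iteratedDeriv s (fun t => f t ^ (n + 1)) x =
        ∑ k ∈ Finset.range (s + 1), (s.choose k : ℝ) *
          iteratedDeriv k (fun t => f t ^ n) x * iteratedDeriv (s - k) f x := by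
      intro s hs
      rw [show (fun t => f t ^ (n + 1)) = fun t => (f t ^ n) * f t from
        funext fun t => pow_succ _ _]
      exact leibniz hv hFv hfv s hs x hxv
    constructor
    · intro s hs
      have hs' : s ≤ n := by omega
      rw [hsum s (by omega)]
      apply Finset.sum_eq_zero
      intro k hk
      have hk' := Finset.mem_range.1 hk
      rcases lt_or_ge k n with h | h
      · rw [IH1 k h]; ring
      · have h0 : s - k = 0 := by omega
        rw [h0]
        simp [hfx]
    · rw [hsum (n + 1) le_rfl]
      rw [Finset.sum_eq_single_of_mem n (Finset.mem_range.2 (by omega))]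
      · have h1 : n + 1 - n = 1 := by omega
        rw [h1, IH2, iteratedDeriv_one, Nat.choose_succ_self_right, Nat.factorial_succ,
          pow_succ]
        push_cast
        ring
      · intro k hk hkn
        have hk' := Finset.mem_range.1 hk
        rcases lt_or_ge k n with h | h
        · rw [IH1 k h]; ring
        · have hk2 : k = n + 1 := by omega
          have h0 : n + 1 - k = 0 := by omega
          rw [h0]
          simp [hfx]

theorem stmt_12 (n : ℕ) (f : ℝ → ℝ) (x : ℝ)
    (hf : ContDiffAt ℝ (n : ℕ∞) f x) (hfx : f x = 0) :
    (∀ s : ℕ, s < n → iteratedDeriv s (fun t => (f t) ^ n) x = 0) ∧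
      iteratedDeriv n (fun t => (f t) ^ n) x = (n.factorial : ℝ) * (deriv f x) ^ n :=
  key n f x hf hfx
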